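/- Let G be a d-regular bipartite graph on vertex sets U, V of equal size with adjacency matrix [[0, A],[Aᵀ, 0]] and all non-trivial eigenvalues bounded by λ. For any bijection π: V → U, the collapse H with (weighted) adjacency matrix A + Aᵀ satisfies: every vertex has weighted degree 2d and every eigenvalue of A + Aᵀ other than 2d (with constant eigenvector) is bounded in absolute value by 2λ. -/

import Mathlib

open Matrix Finset
open scoped RealInnerProductSpace

private theorem stmt_17_key {V : Type*} [Fintype V] [DecidableEq V]
    (A : Matrix V V ℝ) (d lam : ℝ)
    (hrow : ∀ i, ∑ j, A i j = d)
    (hcol : ∀ j, ∑ i, A i j = d)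
    (hspec : ∀ (μ : ℝ) (w : V ⊕ V → ℝ), w ≠ 0 →
      (∑ i, w (Sum.inl i)) = 0 → (∑ i, w (Sum.inr i)) = 0 →
      (Matrix.fromBlocks 0 A Aᵀ 0).mulVec w = μ • w → |μ| ≤ lam)
    (μ : ℝ) (v : V → ℝ) (hv : v ≠ 0) (hsum : (∑ i, v i) = 0)
    (hev : (A + Aᵀ).mulVec v = μ • v) : |μ| ≤ 2 * lam := by
  classical
  set B := Matrix.fromBlocks (0 : Matrix V V ℝ) A Aᵀ 0 with hBdef
  have hB : B.IsHermitian := by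
    unfold Matrix.IsHermitian
    ext (x|x) (y|y) <;> simp [hBdef]
  obtain ⟨i₀, hi₀⟩ : ∃ i, v i ≠ 0 := by
    by_contra h; push_neg at h; exact hv (funext h)
  have hne : Nonempty V := ⟨i₀⟩
  have hcard : (0:ℝ) < (Fintype.card V : ℝ) := by exact_mod_cast Fintype.card_pos
  set f := hB.eigenvectorBasis with hf
  set eig := hB.eigenvalues with heig
  set w : EuclideanSpace ℝ (V ⊕ V) := WithLp.toLp 2 (Sum.elim v v) with hw
  have hinner : ∀ x y : EuclideanSpace ℝ (V ⊕ V), ⟪x, y⟫ = ∑ i, x i * y i := by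
    intro x y
    simp [PiLp.inner_apply, RCLike.inner_apply, mul_comm]
  set c : (V ⊕ V) → ℝ := fun i => ⟪f i, w⟫ with hc
  have hBl : ∀ (u : V ⊕ V → ℝ) x, (B *ᵥ u) (Sum.inl x) = ∑ j, A x j * u (Sum.inr j) := by
    intro u x
    simp [hBdef, Matrix.mulVec, dotProduct, Fintype.sum_sum_type]
  have hBr : ∀ (u : V ⊕ V → ℝ) x, (B *ᵥ u) (Sum.inr x) = ∑ j, A j x * u (Sum.inl j) := by
    intro u x
    simp [hBdef, Matrix.mulVec, dotProduct, Fintype.sum_sum_type]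
  have claim : ∀ i, c i ≠ 0 → |eig i| ≤ lam := by
    intro i hci
    have hg : B *ᵥ ⇑(f i) = eig i • ⇑(f i) := hB.mulVec_eigenvectorBasis i
    set g : V ⊕ V → ℝ := ⇑(f i) with hgdef
    set n : ℝ := (Fintype.card V : ℝ) with hn
    set p : ℝ := ∑ x, g (Sum.inl x) with hp
    set q : ℝ := ∑ x, g (Sum.inr x) with hq
    have hsum1 : d * q = eig i * p := by
      have h1 : ∑ x, (B *ᵥ g) (Sum.inl x) = d * q := by
        simp only [hBl]
        rw [Finset.sum_comm]
        rw [hq, Finset.mul_sum]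
        refine Finset.sum_congr rfl fun j _ => ?_
        rw [← Finset.sum_mul, hcol j]
      have h2 : ∑ x, (B *ᵥ g) (Sum.inl x) = eig i * p := by
        rw [hg]; simp [hp, Finset.mul_sum]
      rw [← h1, h2]
    have hsum2 : d * p = eig i * q := by
      have h1 : ∑ x, (B *ᵥ g) (Sum.inr x) = d * p := by
        simp only [hBr]
        rw [Finset.sum_comm]
        rw [hp, Finset.mul_sum]
        refine Finset.sum_congr rfl fun j _ => ?_
        rw [← Finset.sum_mul, hrow j]
      have h2 : ∑ x, (B *ᵥ g) (Sum.inr x) = eig i * q := by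
        rw [hg]; simp [hq, Finset.mul_sum]
      rw [← h1, h2]
    set t : V ⊕ V → ℝ := Sum.elim (fun _ => p / n) (fun _ => q / n) with ht
    set s : V ⊕ V → ℝ := g - t with hs
    by_cases h0 : s = 0
    · exfalso
      have hgt : g = t := sub_eq_zero.mp (by rw [← hs]; exact h0)
      apply hci
      have hfg : ∀ x, (f i) x = g x := fun _ => rfl
      show ⟪f i, w⟫ = 0
      rw [hinner]
      calc ∑ x : V ⊕ V, (f i) x * w x
          = (p / n) * (∑ x, v x) + (q / n) * (∑ x, v x) := by
            rw [Fintype.sum_sum_type]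
            simp only [hfg]
            rw [hgt]
            simp [ht, hw, Finset.mul_sum]
        _ = 0 := by rw [hsum]; ring
    · have hsl : ∑ x, s (Sum.inl x) = 0 := by
        simp only [hs, ht, Pi.sub_apply, Sum.elim_inl, Finset.sum_sub_distrib,
          Finset.sum_const, Finset.card_univ, nsmul_eq_mul, ← hp, ← hn]
        field_simp
        ring
      have hsr : ∑ x, s (Sum.inr x) = 0 := by
        simp only [hs, ht, Pi.sub_apply, Sum.elim_inr, Finset.sum_sub_distrib,
          Finset.sum_const, Finset.card_univ, nsmul_eq_mul, ← hq, ← hn]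
        field_simp
        ring
      have hBt : B *ᵥ t = eig i • t := by
        funext x
        cases x with
        | inl x =>
          rw [hBl]
          simp only [ht, Sum.elim_inr, Sum.elim_inl, Pi.smul_apply, smul_eq_mul]
          rw [← Finset.sum_mul, hrow x, ← mul_div_assoc, hsum1, mul_div_assoc]
        | inr x =>
          rw [hBr]
          simp only [ht, Sum.elim_inr, Sum.elim_inl, Pi.smul_apply, smul_eq_mul]
          rw [← Finset.sum_mul, hcol x, ← mul_div_assoc, hsum2, mul_div_assoc]
      have heq : B *ᵥ s = eig i • s := by
        rw [hs, Matrix.mulVec_sub, hg, hBt, smul_sub]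
      exact hspec (eig i) s h0 hsl hsr heq
  -- Quadratic form computation
  have hBt' : Bᵀ = B := by
    have h := hB
    unfold Matrix.IsHermitian at h
    conv_rhs => rw [← h]
    ext x y; simp
  have hfb : ∀ i, ⟪f i, (WithLp.toLp 2 (B *ᵥ w) : EuclideanSpace ℝ (V ⊕ V))⟫ = eig i * c i := by
    intro i
    have hg : B *ᵥ ⇑(f i) = eig i • ⇑(f i) := hB.mulVec_eigenvectorBasis i
    rw [hinner]
    have h1 : ∑ x, (f i) x * (B *ᵥ (w : V ⊕ V → ℝ)) x
        = (⇑(f i)) ⬝ᵥ (B *ᵥ (w : V ⊕ V → ℝ)) := rfl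
    rw [WithLp.ofLp_toLp, h1, dotProduct_mulVec, ← Matrix.mulVec_transpose, hBt', hg]
    have h2 : c i = (⇑(f i)) ⬝ᵥ (w : V ⊕ V → ℝ) := by
      show ⟪f i, w⟫ = _
      rw [hinner]; rfl
    rw [h2]
    simp [smul_dotProduct]
  have hquad : ⟪w, (WithLp.toLp 2 (B *ᵥ w) : EuclideanSpace ℝ (V ⊕ V))⟫ = ∑ i, eig i * (c i * c i) := by
    rw [← f.sum_inner_mul_inner w (WithLp.toLp 2 (B *ᵥ w) : EuclideanSpace ℝ (V ⊕ V))]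
    refine Finset.sum_congr rfl fun i _ => ?_
    rw [hfb i, real_inner_comm (f i) w]
    show c i * (eig i * c i) = _
    ring
  have hpar : ⟪w, w⟫ = ∑ i, c i * c i := by
    rw [← f.sum_inner_mul_inner w w]
    refine Finset.sum_congr rfl fun i _ => ?_
    rw [real_inner_comm (f i) w]
  set S : ℝ := ∑ x, v x * v x with hS
  have hSpos : 0 < S := by
    rw [hS]
    exact Finset.sum_pos' (fun x _ => mul_self_nonneg _)
      ⟨i₀, Finset.mem_univ _, mul_self_pos.mpr hi₀⟩
  have hBw : (B *ᵥ (w : V ⊕ V → ℝ)) = Sum.elim (A *ᵥ v) (Aᵀ *ᵥ v) := by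
    funext x
    cases x with
    | inl x =>
      rw [hBl]
      simp [hw, Matrix.mulVec, dotProduct]
    | inr x =>
      rw [hBr]
      simp [hw, Matrix.mulVec, dotProduct, mul_comm]
  have hAv : ∀ x, (A *ᵥ v) x + (Aᵀ *ᵥ v) x = μ * v x := by
    intro x
    have h := congrFun hev x
    simpa [Matrix.add_mulVec, Pi.add_apply] using h
  have hq1 : ⟪w, (WithLp.toLp 2 (B *ᵥ w) : EuclideanSpace ℝ (V ⊕ V))⟫ = μ * S := by
    rw [hinner]
    have : ∀ x : V ⊕ V, (w : V ⊕ V → ℝ) x * (B *ᵥ (w : V ⊕ V → ℝ)) x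
        = (w : V ⊕ V → ℝ) x * (Sum.elim (A *ᵥ v) (Aᵀ *ᵥ v)) x := by
      intro x; rw [hBw]
    rw [Fintype.sum_sum_type]
    simp only [WithLp.ofLp_toLp, hBw]
    simp only [hBw, hw, Sum.elim_inl, Sum.elim_inr]
    rw [← Finset.sum_add_distrib, hS, Finset.mul_sum]
    refine Finset.sum_congr rfl fun x _ => ?_
    rw [← mul_add, hAv x]; ring
  have hww : ⟪w, w⟫ = 2 * S := by
    rw [hinner, Fintype.sum_sum_type]
    simp only [hw, Sum.elim_inl, Sum.elim_inr, ← hS]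
    ring
  have hterm : ∀ i, |eig i * (c i * c i)| ≤ lam * (c i * c i) := by
    intro i
    by_cases h : c i = 0
    · simp [h]
    · rw [abs_mul, abs_of_nonneg (mul_self_nonneg (c i))]
      exact mul_le_mul_of_nonneg_right (claim i h) (mul_self_nonneg _)
  have h1 : |μ * S| ≤ lam * (2 * S) := by
    calc |μ * S| = |∑ i, eig i * (c i * c i)| := by rw [← hquad, hq1]
      _ ≤ ∑ i, |eig i * (c i * c i)| := Finset.abs_sum_le_sum_abs _ _
      _ ≤ ∑ i, lam * (c i * c i) := Finset.sum_le_sum fun i _ => hterm i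
      _ = lam * ⟪w, w⟫ := by rw [hpar, Finset.mul_sum]
      _ = lam * (2 * S) := by rw [hww]
  rw [abs_mul, abs_of_pos hSpos] at h1
  have h2 : |μ| * S ≤ (2 * lam) * S := by linarith
  exact le_of_mul_le_mul_right h2 hSpos

/-- Collapse of a bipartite expander: if the `d`-regular bipartite graph with adjacency
matrix `[[0, A], [Aᵀ, 0]]` has all non-trivial eigenvalues bounded by `λ`, then its collapse
(with weighted adjacency matrix `A + Aᵀ`, identifying the two sides via the identity
bijection) has every vertex of weighted degree `2d`, and every eigenvalue other than `2d`
(equivalently, every eigenvalue on a vector orthogonal to the constant vector) is bounded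
in absolute value by `2λ`. -/
theorem stmt_17 {V : Type*} [Fintype V] [DecidableEq V]
    (A : Matrix V V ℝ) (d lam : ℝ)
    (hrow : ∀ i, ∑ j, A i j = d)
    (hcol : ∀ j, ∑ i, A i j = d)
    (hspec : ∀ (μ : ℝ) (w : V ⊕ V → ℝ), w ≠ 0 →
      (∑ i, w (Sum.inl i)) = 0 → (∑ i, w (Sum.inr i)) = 0 →
      (Matrix.fromBlocks 0 A Aᵀ 0).mulVec w = μ • w → |μ| ≤ lam) :
    (∀ i, ∑ j, (A + Aᵀ) i j = 2 * d) ∧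
    (∀ (μ : ℝ) (v : V → ℝ), v ≠ 0 → (∑ i, v i) = 0 →
      (A + Aᵀ).mulVec v = μ • v → |μ| ≤ 2 * lam) := by
  constructor
  · intro i
    have h1 : ∑ j, (A + Aᵀ) i j = (∑ j, A i j) + ∑ j, A j i := by
      simp [Matrix.add_apply, Finset.sum_add_distrib]
    rw [h1, hrow, hcol]; ring
  · intro μ v hv hsum hev
    exact stmt_17_key A d lam hrow hcol hspec μ v hv hsum hev
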